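/- Let E be a finite-dimensional real inner product space, let L : E × E × E → ℝ be continuously differentiable, and let q : ℝ → E be four times differentiable. Denote by ∇₁L, ∇₂L, ∇₃L : E × E × E → E the partial gradients of L with respect to its three arguments (defined via the inner product). Suppose the curves P₁(t) = ∇₃L(q(t), q'(t), q''(t)) and P₀(t) = ∇₂L(q(t), q'(t), q''(t)) − P₁'(t) are differentiable and that the second-order Euler–Lagrange equation holds in the form P₀'(t) = ∇₁L(q(t), q'(t), q''(t)) for all t. Then the Lagrangian energy E_L(t) = ⟨q'(t), P₀(t)⟩ + ⟨q''(t), P₁(t)⟩ − L(q(t), q'(t), q''(t)) is constant: E_L'(t) = 0 for all t. -/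

import Mathlib

open scoped RealInnerProductSpace

lemma inner_gradient_eq' {E : Type*} [NormedAddCommGroup E] [InnerProductSpace ℝ E]
    [CompleteSpace E] (f : E → ℝ) (x u : E) :
    ⟪u, gradient f x⟫ = fderiv ℝ f x u := by
  rw [real_inner_comm, gradient, ← InnerProductSpace.toDual_apply_apply,
    LinearIsometryEquiv.apply_symm_apply]

theorem secondOrder_lagrangian_energy_conservation {E : Type*}
    [NormedAddCommGroup E] [InnerProductSpace ℝ E] [FiniteDimensional ℝ E]
    (L : E × E × E → ℝ) (hL : ContDiff ℝ 1 L)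
    (q : ℝ → E)
    (hq1 : Differentiable ℝ q)
    (hq2 : Differentiable ℝ (deriv q))
    (hq3 : Differentiable ℝ (deriv (deriv q)))
    (hq4 : Differentiable ℝ (deriv (deriv (deriv q))))
    (P₁ P₀ : ℝ → E)
    (hP₁def : ∀ t, P₁ t =
      gradient (fun c : E => L (q t, deriv q t, c)) (deriv (deriv q) t))
    (hP₁diff : Differentiable ℝ P₁)
    (hP₀def : ∀ t, P₀ t =
      gradient (fun b : E => L (q t, b, deriv (deriv q) t)) (deriv q t)
        - deriv P₁ t)
    (hP₀diff : Differentiable ℝ P₀)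
    (hEL : ∀ t, deriv P₀ t =
      gradient (fun a : E => L (a, deriv q t, deriv (deriv q) t)) (q t)) :
    ∀ t, deriv (fun s : ℝ =>
      ⟪deriv q s, P₀ s⟫ + ⟪deriv (deriv q) s, P₁ s⟫
        - L (q s, deriv q s, deriv (deriv q) s)) t = 0 := by
  intro t
  have hcd : HasDerivAt (fun s => (q s, deriv q s, deriv (deriv q) s)) ((deriv q t), (deriv (deriv q) t), (deriv (deriv (deriv q)) t)) t :=
    HasDerivAt.prodMk ((hq1 t).hasDerivAt) (HasDerivAt.prodMk ((hq2 t).hasDerivAt) ((hq3 t).hasDerivAt))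
  have hLd : DifferentiableAt ℝ L ((q t), (deriv q t), (deriv (deriv q) t)) := (hL.differentiable one_ne_zero) _
  -- derivative of L along curve
  have hLc : HasDerivAt (fun s => L (q s, deriv q s, deriv (deriv q) s))
      (fderiv ℝ L ((q t), (deriv q t), (deriv (deriv q) t)) ((deriv q t), (deriv (deriv q) t), (deriv (deriv (deriv q)) t))) t :=
    hLd.hasFDerivAt.comp_hasDerivAt t hcd
  -- partial gradient facts
  have hg1 : ∀ u : E, ⟪u, gradient (fun a : E => L (a, (deriv q t), (deriv (deriv q) t))) (q t)⟫ = fderiv ℝ L ((q t), (deriv q t), (deriv (deriv q) t)) (u, 0, 0) := by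
    intro u
    rw [inner_gradient_eq']
    have hj : HasFDerivAt (fun a : E => (a, (deriv q t), (deriv (deriv q) t)))
        ((ContinuousLinearMap.id ℝ E).prod ((0 : E →L[ℝ] E).prod 0)) (q t) :=
      HasFDerivAt.prodMk (hasFDerivAt_id (q t)) (HasFDerivAt.prodMk (hasFDerivAt_const _ _) (hasFDerivAt_const _ _))
    have : HasFDerivAt (fun a : E => L (a, (deriv q t), (deriv (deriv q) t)))
        ((fderiv ℝ L ((q t), (deriv q t), (deriv (deriv q) t))).comp ((ContinuousLinearMap.id ℝ E).prod ((0 : E →L[ℝ] E).prod 0))) (q t) :=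
      hLd.hasFDerivAt.comp (q t) hj
    rw [this.fderiv]; rfl
  have hg2 : ∀ u : E, ⟪u, gradient (fun b : E => L ((q t), b, (deriv (deriv q) t))) (deriv q t)⟫ = fderiv ℝ L ((q t), (deriv q t), (deriv (deriv q) t)) (0, u, 0) := by
    intro u
    rw [inner_gradient_eq']
    have hj : HasFDerivAt (fun b : E => (((q t) : E), b, (deriv (deriv q) t)))
        ((0 : E →L[ℝ] E).prod ((ContinuousLinearMap.id ℝ E).prod 0)) (deriv q t) :=
      HasFDerivAt.prodMk (hasFDerivAt_const _ _) (HasFDerivAt.prodMk (hasFDerivAt_id (deriv q t)) (hasFDerivAt_const _ _))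
    have : HasFDerivAt (fun b : E => L ((q t), b, (deriv (deriv q) t)))
        ((fderiv ℝ L ((q t), (deriv q t), (deriv (deriv q) t))).comp ((0 : E →L[ℝ] E).prod ((ContinuousLinearMap.id ℝ E).prod 0))) (deriv q t) :=
      hLd.hasFDerivAt.comp (deriv q t) hj
    rw [this.fderiv]; rfl
  have hg3 : ∀ u : E, ⟪u, gradient (fun z : E => L ((q t), (deriv q t), z)) (deriv (deriv q) t)⟫ = fderiv ℝ L ((q t), (deriv q t), (deriv (deriv q) t)) (0, 0, u) := by
    intro u
    rw [inner_gradient_eq']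
    have hj : HasFDerivAt (fun z : E => (((q t) : E), (deriv q t), z))
        ((0 : E →L[ℝ] E).prod ((0 : E →L[ℝ] E).prod (ContinuousLinearMap.id ℝ E))) (deriv (deriv q) t) :=
      HasFDerivAt.prodMk (hasFDerivAt_const _ _) (HasFDerivAt.prodMk (hasFDerivAt_const _ _) (hasFDerivAt_id (deriv (deriv q) t)))
    have : HasFDerivAt (fun z : E => L ((q t), (deriv q t), z))
        ((fderiv ℝ L ((q t), (deriv q t), (deriv (deriv q) t))).comp ((0 : E →L[ℝ] E).prod ((0 : E →L[ℝ] E).prod (ContinuousLinearMap.id ℝ E)))) (deriv (deriv q) t) :=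
      hLd.hasFDerivAt.comp (deriv (deriv q) t) hj
    rw [this.fderiv]; rfl
  -- split the total fderiv
  have hsplit : fderiv ℝ L ((q t), (deriv q t), (deriv (deriv q) t)) ((deriv q t), (deriv (deriv q) t), (deriv (deriv (deriv q)) t))
      = fderiv ℝ L ((q t), (deriv q t), (deriv (deriv q) t)) ((deriv q t), 0, 0) + fderiv ℝ L ((q t), (deriv q t), (deriv (deriv q) t)) (0, (deriv (deriv q) t), 0)
        + fderiv ℝ L ((q t), (deriv q t), (deriv (deriv q) t)) (0, 0, (deriv (deriv (deriv q)) t)) := by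
    rw [← map_add, ← map_add]
    norm_num [Prod.mk_add_mk]
  -- derivative of the inner product terms
  have h1 : HasDerivAt (fun s => ⟪deriv q s, P₀ s⟫)
      (⟪(deriv q t), deriv P₀ t⟫ + ⟪(deriv (deriv q) t), P₀ t⟫) t :=
    HasDerivAt.inner ℝ ((hq2 t).hasDerivAt) ((hP₀diff t).hasDerivAt)
  have h2 : HasDerivAt (fun s => ⟪deriv (deriv q) s, P₁ s⟫)
      (⟪(deriv (deriv q) t), deriv P₁ t⟫ + ⟪(deriv (deriv (deriv q)) t), P₁ t⟫) t :=
    HasDerivAt.inner ℝ ((hq3 t).hasDerivAt) ((hP₁diff t).hasDerivAt)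
  have htot : HasDerivAt (fun s : ℝ =>
      ⟪deriv q s, P₀ s⟫ + ⟪deriv (deriv q) s, P₁ s⟫
        - L (q s, deriv q s, deriv (deriv q) s))
      ((⟪(deriv q t), deriv P₀ t⟫ + ⟪(deriv (deriv q) t), P₀ t⟫) + (⟪(deriv (deriv q) t), deriv P₁ t⟫ + ⟪(deriv (deriv (deriv q)) t), P₁ t⟫)
        - fderiv ℝ L ((q t), (deriv q t), (deriv (deriv q) t)) ((deriv q t), (deriv (deriv q) t), (deriv (deriv (deriv q)) t))) t := (h1.add h2).sub hLc
  rw [htot.deriv]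
  rw [hsplit, hEL t, hP₀def t, hP₁def t]
  rw [inner_sub_right, hg1, hg2, hg3]
  ring
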